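/- Let I ⊆ ℝ be a nonempty open interval, μ1, μ2 ∈ ℝ, D : ℝ → ℝ an invertible additive function, and define g_k : I → ℝ by g_k(x) = D(x) + μ_k for k ∈ {1,2}. Then (F,f1,f2,G,g1,g2) solves equation (1) if and only if there exist an additive function C : ℝ → ℝ and constants λ1, λ2 ∈ ℝ such that f_k(x) = C(x) + λ_k for all x ∈ I and k ∈ {1,2}, and G(u) = F(D^{-1}(u−μ)/2) + C(D^{-1}(u−μ)) + λ1 + λ2 for all u ∈ g1(I)+g2(I), where μ := μ1 + μ2. -/

import Mathlib

open Set Pointwise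

/-- Equation (1): `F((x+y)/2) + f1(x) + f2(y) = G(g1(x) + g2(y))` for all `x, y ∈ I`. -/
def SolvesEq1 (I : Set ℝ) (F f1 f2 G g1 g2 : ℝ → ℝ) : Prop :=
  ∀ x ∈ I, ∀ y ∈ I, F ((x + y) / 2) + f1 x + f2 y = G (g1 x + g2 y)

/-- A function additive on an ord-connected set `J` containing a ball around `0`
extends to a globally additive function. -/
lemma localAdd_ext (k : ℝ → ℝ) (J : Set ℝ) (hJ0 : (0:ℝ) ∈ J) (hJc : J.OrdConnected)
    (δ : ℝ) (hδ : 0 < δ) (hball : ∀ u : ℝ, |u| < δ → u ∈ J)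
    (hk : ∀ u ∈ J, ∀ v ∈ J, k (u + v) = k u + k v) :
    ∃ C : ℝ → ℝ, (∀ s t : ℝ, C (s + t) = C s + C t) ∧ ∀ t ∈ J, C t = k t := by
  have k0 : k 0 = 0 := by
    have := hk 0 hJ0 0 hJ0
    simp at this
    linarith
  have smul : ∀ (n : ℕ) (w : ℝ), (∀ j : ℕ, j ≤ n → (j:ℝ) * w ∈ J) →
      k ((n:ℝ) * w) = n * k w := by
    intro n
    induction n with
    | zero => intro w _; simp [k0]
    | succ n ih =>
      intro w hw
      have hw' : ∀ j : ℕ, j ≤ n → (j:ℝ) * w ∈ J := fun j hj => hw j (Nat.le_succ_of_le hj)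
      have hwJ : w ∈ J := by
        have := hw 1 (by omega); simpa using this
      have e : ((n+1 : ℕ):ℝ) * w = (n:ℝ) * w + w := by push_cast; ring
      rw [e, hk _ (hw' n le_rfl) _ hwJ, ih w hw']
      push_cast; ring
  -- well-definedness of the extension
  have welldef : ∀ (n m : ℕ) (t : ℝ), |t| < n * δ → |t| < m * δ →
      (n:ℝ) * k (t / n) = (m:ℝ) * k (t / m) := by
    intro n m t hn hm
    have hn0 : 0 < (n:ℝ) := by
      by_contra h
      push_neg at h
      have : (n:ℝ) * δ ≤ 0 := mul_nonpos_of_nonpos_of_nonneg h hδ.le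
      nlinarith [abs_nonneg t]
    have hm0 : 0 < (m:ℝ) := by
      by_contra h
      push_neg at h
      have : (m:ℝ) * δ ≤ 0 := mul_nonpos_of_nonpos_of_nonneg h hδ.le
      nlinarith [abs_nonneg t]
    have h1 : k (t / n) = m * k (t / (n * m)) := by
      have e : t / (n:ℝ) = (m:ℝ) * (t / ((n:ℝ) * m)) := by
        field_simp
      rw [e]
      refine smul m (t / ((n:ℝ) * m)) ?_
      intro j hj
      apply hball
      have hj' : (j:ℝ) ≤ (m:ℝ) := by exact_mod_cast hj
      have habs : |(j:ℝ) * (t / ((n:ℝ) * m))| = (j:ℝ) * |t| / ((n:ℝ) * m) := by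
        rw [abs_mul, abs_div, abs_mul, abs_of_pos hn0, abs_of_pos hm0, Nat.abs_cast,
          mul_div_assoc]
      rw [habs, div_lt_iff₀ (by positivity)]
      nlinarith [mul_le_mul_of_nonneg_right hj' (abs_nonneg t), abs_nonneg t]
    have h2 : k (t / m) = n * k (t / (n * m)) := by
      have e : t / (m:ℝ) = (n:ℝ) * (t / ((n:ℝ) * m)) := by
        field_simp
      rw [e]
      refine smul n (t / ((n:ℝ) * m)) ?_
      intro j hj
      apply hball
      have hj' : (j:ℝ) ≤ (n:ℝ) := by exact_mod_cast hj
      have habs : |(j:ℝ) * (t / ((n:ℝ) * m))| = (j:ℝ) * |t| / ((n:ℝ) * m) := by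
        rw [abs_mul, abs_div, abs_mul, abs_of_pos hn0, abs_of_pos hm0, Nat.abs_cast,
          mul_div_assoc]
      rw [habs, div_lt_iff₀ (by positivity)]
      nlinarith [mul_le_mul_of_nonneg_right hj' (abs_nonneg t), abs_nonneg t]
    rw [h1, h2]; ring
  set N : ℝ → ℕ := fun t => ⌈|t| / δ⌉₊ + 1 with hNdef
  have hN : ∀ t : ℝ, |t| < (N t : ℝ) * δ := by
    intro t
    have h1 : |t| / δ ≤ (⌈|t| / δ⌉₊ : ℝ) := Nat.le_ceil _
    rw [div_le_iff₀ hδ] at h1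
    have : ((N t : ℕ) : ℝ) = (⌈|t| / δ⌉₊ : ℝ) + 1 := by simp [hNdef]
    rw [this]
    nlinarith
  refine ⟨fun t => (N t : ℝ) * k (t / N t), ?_, ?_⟩
  · intro s t
    show (N (s+t) : ℝ) * k ((s+t) / N (s+t)) = (N s : ℝ) * k (s / N s) + (N t : ℝ) * k (t / N t)
    set n : ℕ := N s + N t + N (s + t) with hndef
    have hδn : ∀ r : ℝ, N r ≤ n → |r| < (n:ℝ) * δ := by
      intro r hr
      refine lt_of_lt_of_le (hN r) ?_
      have : ((N r : ℕ):ℝ) ≤ (n:ℝ) := by exact_mod_cast hr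
      nlinarith
    have hs : |s| < (n:ℝ) * δ := hδn s (by omega)
    have ht : |t| < (n:ℝ) * δ := hδn t (by omega)
    have hst : |s + t| < (n:ℝ) * δ := hδn (s + t) (by omega)
    have hn0 : 0 < (n:ℝ) := by
      by_contra h
      push_neg at h
      nlinarith [abs_nonneg s]
    have e1 : (N s : ℝ) * k (s / N s) = (n:ℝ) * k (s / n) := welldef _ _ _ (hN s) hs
    have e2 : (N t : ℝ) * k (t / N t) = (n:ℝ) * k (t / n) := welldef _ _ _ (hN t) ht
    have e3 : (N (s+t) : ℝ) * k ((s+t) / N (s+t)) = (n:ℝ) * k ((s+t) / n) :=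
      welldef _ _ _ (hN (s+t)) hst
    rw [e1, e2, e3]
    have hsmall : ∀ r : ℝ, |r| < (n:ℝ) * δ → |r / n| < δ := by
      intro r hr
      rw [abs_div, abs_of_pos hn0, div_lt_iff₀ hn0]
      linarith [hr]
    have : k ((s+t)/n) = k (s/n) + k (t/n) := by
      have e : (s+t)/(n:ℝ) = s/n + t/n := by ring
      rw [e]
      exact hk _ (hball _ (hsmall s hs)) _ (hball _ (hsmall t ht))
    rw [this]; ring
  · intro t htJ
    show (N t : ℝ) * k (t / N t) = k t
    have hn0 : 0 < (N t : ℝ) := by positivity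
    have hmem : ∀ j : ℕ, j ≤ N t → (j:ℝ) * (t / N t) ∈ J := by
      intro j hj
      have hj' : (j:ℝ) ≤ (N t : ℝ) := by exact_mod_cast hj
      have ht' : (t / (N t:ℝ)) * (N t:ℝ) = t := div_mul_cancel₀ t hn0.ne'
      have huIcc : (j:ℝ) * (t / N t) ∈ uIcc 0 t := by
        rcases le_total 0 t with h | h
        · rw [uIcc_of_le h]
          constructor
          · positivity
          · nlinarith [mul_le_mul_of_nonneg_right hj' (div_nonneg h hn0.le)]
        · rw [uIcc_of_ge h]
          constructor
          · nlinarith [mul_le_mul_of_nonneg_right hj' (div_nonneg (neg_nonneg.mpr h) hn0.le)]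
          · have hdiv : t / (N t:ℝ) ≤ 0 := div_nonpos_of_nonpos_of_nonneg h hn0.le
            nlinarith
      exact hJc.uIcc_subset hJ0 htJ huIcc
    have := smul (N t) (t / N t) hmem
    rw [mul_div_cancel₀ t hn0.ne'] at this
    rw [← this]
/-- Suppose `g_k = D + μ_k` on `I`, where `D : ℝ → ℝ` is an invertible
additive function (with inverse `Dinv`).  Then `(F,f1,f2,G,g1,g2)` solves equation (1)
if and only if there exist an additive `C : ℝ → ℝ` and constants `λ1, λ2 ∈ ℝ` such that
`f_k(x) = C(x) + λ_k` on `I` and `G(u) = F(D⁻¹(u−μ)/2) + C(D⁻¹(u−μ)) + λ1 + λ2` on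
`g1(I) + g2(I)`, where `μ = μ1 + μ2`. -/
theorem stmt7
    (I : Set ℝ) (hIo : IsOpen I) (hIc : I.OrdConnected) (hIne : I.Nonempty)
    (mu1 mu2 : ℝ) (D Dinv : ℝ → ℝ)
    (hD : ∀ s t : ℝ, D (s + t) = D s + D t)
    (hDinv1 : Function.LeftInverse Dinv D)
    (hDinv2 : Function.RightInverse Dinv D)
    (F f1 f2 G g1 g2 : ℝ → ℝ)
    (hg1 : ∀ x ∈ I, g1 x = D x + mu1)
    (hg2 : ∀ x ∈ I, g2 x = D x + mu2) :
    SolvesEq1 I F f1 f2 G g1 g2 ↔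
      ∃ C : ℝ → ℝ, (∀ s t : ℝ, C (s + t) = C s + C t) ∧
        ∃ lam1 lam2 : ℝ,
          (∀ x ∈ I, f1 x = C x + lam1 ∧ f2 x = C x + lam2) ∧
          (∀ u ∈ g1 '' I + g2 '' I,
            G u = F (Dinv (u - (mu1 + mu2)) / 2) + C (Dinv (u - (mu1 + mu2)))
              + lam1 + lam2) := by
  constructor
  · intro heq
    obtain ⟨x0, hx0⟩ := hIne
    obtain ⟨δ, hδ, hball0⟩ := Metric.isOpen_iff.mp hIo x0 hx0
    set h : ℝ → ℝ := fun s => G (D s + (mu1 + mu2)) - F (s / 2) with hhdef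
    have hfh : ∀ x ∈ I, ∀ y ∈ I, f1 x + f2 y = h (x + y) := by
      intro x hx y hy
      have e := heq x hx y hy
      rw [hg1 x hx, hg2 y hy] at e
      have : G (D x + mu1 + (D y + mu2)) = G (D (x + y) + (mu1 + mu2)) := by
        rw [hD]; ring_nf
      rw [this] at e
      simp only [hhdef]
      linarith
    set k : ℝ → ℝ := fun t => h (t + 2 * x0) - h (2 * x0) with hkdef
    set J : Set ℝ := {u : ℝ | u + x0 ∈ I} with hJdef
    have hJ0 : (0:ℝ) ∈ J := by simp [hJdef, hx0]
    have hJc : J.OrdConnected := by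
      refine ⟨fun a ha b hb c hc => ?_⟩
      exact hIc.out ha hb ⟨add_le_add_left hc.1 x0, add_le_add_left hc.2 x0⟩
    have hballJ : ∀ u : ℝ, |u| < δ → u ∈ J := by
      intro u hu
      have : u + x0 ∈ Metric.ball x0 δ := by
        simp [Real.dist_eq]
        simpa using hu
      exact hball0 this
    have hkadd : ∀ u ∈ J, ∀ v ∈ J, k (u + v) = k u + k v := by
      intro u hu v hv
      have h1 := hfh (u + x0) hu (v + x0) hv
      have h2 := hfh (u + x0) hu x0 hx0
      have h3 := hfh x0 hx0 (v + x0) hv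
      have h4 := hfh x0 hx0 x0 hx0
      have e1 : u + x0 + (v + x0) = u + v + 2 * x0 := by ring
      have e2 : u + x0 + x0 = u + 2 * x0 := by ring
      have e3 : x0 + (v + x0) = v + 2 * x0 := by ring
      have e4 : x0 + x0 = 2 * x0 := by ring
      rw [e1] at h1; rw [e2] at h2; rw [e3] at h3; rw [e4] at h4
      simp only [hkdef]
      linarith
    obtain ⟨C, hCadd, hCJ⟩ := localAdd_ext k J hJ0 hJc δ hδ hballJ hkadd
    have hCk : ∀ x ∈ I, C x - C x0 = h (x + x0) - h (2 * x0) := by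
      intro x hx
      have hxJ : x - x0 ∈ J := by simp [hJdef, hx]
      have e := hCJ (x - x0) hxJ
      have e2 : C x = C (x - x0) + C x0 := by
        have := hCadd (x - x0) x0
        simpa using this
      have e3 : x - x0 + 2 * x0 = x + x0 := by ring
      simp only [hkdef] at e
      rw [e3] at e
      linarith
    refine ⟨C, hCadd, h (2 * x0) - f2 x0 - C x0, h (2 * x0) - f1 x0 - C x0, ?_, ?_⟩
    · intro x hx
      have h1 := hfh x hx x0 hx0
      have h2' := hfh x0 hx0 x hx
      have e : x0 + x = x + x0 := by ring
      rw [e] at h2'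
      have := hCk x hx
      constructor <;> linarith
    · intro u hu
      rw [Set.mem_add] at hu
      obtain ⟨a, ha, b, hb, hab⟩ := hu
      obtain ⟨x, hx, rfl⟩ := ha
      obtain ⟨y, hy, rfl⟩ := hb
      have hDu : u - (mu1 + mu2) = D (x + y) := by
        rw [hD]
        rw [hg1 x hx, hg2 y hy] at hab
        linarith
      rw [hDu, hDinv1]
      have e := heq x hx y hy
      have hCxy : C (x + y) = C x + C y := hCadd x y
      have hf1 : f1 x = C x + (h (2 * x0) - f2 x0 - C x0) := by
        have h1 := hfh x hx x0 hx0
        have := hCk x hx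
        linarith
      have hf2 : f2 y = C y + (h (2 * x0) - f1 x0 - C x0) := by
        have h1 := hfh x0 hx0 y hy
        have e' : x0 + y = y + x0 := by ring
        rw [e'] at h1
        have := hCk y hy
        linarith
      rw [← hab]
      linear_combination e.symm + hf1 + hf2 - hCxy
  · rintro ⟨C, hCadd, lam1, lam2, hf, hG⟩ x hx y hy
    have hmem : g1 x + g2 y ∈ g1 '' I + g2 '' I :=
      add_mem_add (mem_image_of_mem _ hx) (mem_image_of_mem _ hy)
    rw [hG _ hmem]
    have h1 : g1 x + g2 y - (mu1 + mu2) = D (x + y) := by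
      rw [hg1 x hx, hg2 y hy, hD]; ring
    rw [h1, hDinv1]
    have hCxy : C (x + y) = C x + C y := hCadd x y
    obtain ⟨e1, _⟩ := hf x hx
    obtain ⟨_, e2⟩ := hf y hy
    linarith
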